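/- Let M be a Hausdorff topological abelian group and f : [0,∞)^n → M a function that in each variable is a continuous additive homomorphism (with respect to addition on [0,∞)). Then for any indices i ≠ j and any a, λ_1, …, λ_n ∈ [0,∞), f(λ_1, …, aλ_i, …, λ_n) = f(λ_1, …, aλ_j, …, λ_n), where the scalar a multiplies the i-th (resp. j-th) coordinate. -/

import Mathlib

open scoped NNReal

theorem stmt6 {M : Type*} [AddCommGroup M] [TopologicalSpace M] [IsTopologicalAddGroup M]
    [T2Space M] {n : ℕ} (f : (Fin n → ℝ≥0) → M)
    (hcont : ∀ (i : Fin n) (x : Fin n → ℝ≥0),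
      Continuous fun t : ℝ≥0 => f (Function.update x i t))
    (hadd : ∀ (i : Fin n) (x : Fin n → ℝ≥0) (a b : ℝ≥0),
      f (Function.update x i (a + b))
        = f (Function.update x i a) + f (Function.update x i b))
    (i j : Fin n) (hij : i ≠ j) (a : ℝ≥0) (lam : Fin n → ℝ≥0) :
    f (Function.update lam i (a * lam i)) = f (Function.update lam j (a * lam j)) := by
  set g : ℝ≥0 → ℝ≥0 → M :=
    fun s t => f (Function.update (Function.update lam i s) j t) with hg
  -- rewriting with updates swapped
  have hswap : ∀ s t, g s t = f (Function.update (Function.update lam j t) i s) := by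
    intro s t
    simp only [hg, Function.update_comm hij]
  -- additivity in each variable
  have hg1 : ∀ s s' t, g (s + s') t = g s t + g s' t := by
    intro s s' t
    rw [hswap, hswap, hswap]
    exact hadd i (Function.update lam j t) s s'
  have hg2 : ∀ s t t', g s (t + t') = g s t + g s t' := by
    intro s t t'
    exact hadd j (Function.update lam i s) t t'
  -- zero
  have hz1 : ∀ t, g 0 t = 0 := by
    intro t
    have := hg1 0 0 t
    rw [add_zero] at this
    exact (left_eq_add.mp this)
  have hz2 : ∀ s, g s 0 = 0 := by
    intro s
    have := hg2 s 0 0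
    rw [add_zero] at this
    exact (left_eq_add.mp this)
  -- natural multiples
  have hn1 : ∀ (k : ℕ) (s t : ℝ≥0), g ((k : ℝ≥0) * s) t = k • g s t := by
    intro k
    induction k with
    | zero => intro s t; simpa using hz1 _
    | succ m ih =>
      intro s t
      have : ((m + 1 : ℕ) : ℝ≥0) * s = (m : ℝ≥0) * s + s := by push_cast; ring
      rw [this, hg1, ih, succ_nsmul]
  have hn2 : ∀ (k : ℕ) (s t : ℝ≥0), g s ((k : ℝ≥0) * t) = k • g s t := by
    intro k
    induction k with
    | zero => intro s t; simpa using hz2 _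
    | succ m ih =>
      intro s t
      have : ((m + 1 : ℕ) : ℝ≥0) * t = (m : ℝ≥0) * t + t := by push_cast; ring
      rw [this, hg2, ih, succ_nsmul]
  -- key: swap rational scalars between the two slots
  have key : ∀ (p q : ℕ), q ≠ 0 → ∀ s t : ℝ≥0,
      g ((p / q : ℝ≥0) * s) t = g s ((p / q : ℝ≥0) * t) := by
    intro p q hq s t
    have hq' : (q : ℝ≥0) ≠ 0 := Nat.cast_ne_zero.mpr hq
    calc g ((p / q : ℝ≥0) * s) t
        = g ((p / q : ℝ≥0) * s) ((q : ℝ≥0) * (t / q)) := by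
          rw [mul_div_cancel₀ t hq']
      _ = q • g ((p / q : ℝ≥0) * s) (t / q) := hn2 q _ _
      _ = g ((q : ℝ≥0) * ((p / q : ℝ≥0) * s)) (t / q) := (hn1 q _ _).symm
      _ = g ((p : ℝ≥0) * s) (t / q) := by
          rw [← mul_assoc, mul_div_cancel₀ _ hq']
      _ = p • g s (t / q) := hn1 p _ _
      _ = g s ((p : ℝ≥0) * (t / q)) := (hn2 p _ _).symm
      _ = g s ((p / q : ℝ≥0) * t) := by rw [← mul_div_assoc, div_mul_eq_mul_div]
  -- The two sides as continuous functions of the scalar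
  set F : ℝ≥0 → M := fun b => g (b * lam i) (lam j) with hF
  set G : ℝ≥0 → M := fun b => g (lam i) (b * lam j) with hG
  have hFsimp : ∀ b, F b = f (Function.update lam i (b * lam i)) := by
    intro b
    simp only [hF, hg]
    congr 1
    rw [Function.update_comm hij, Function.update_eq_self]
  have hGsimp : ∀ b, G b = f (Function.update lam j (b * lam j)) := by
    intro b
    simp only [hG, hg, Function.update_eq_self]
  have hFcont : Continuous F := by
    have : Continuous fun s : ℝ≥0 => f (Function.update lam i s) := hcont i lam
    have := this.comp (continuous_id.mul continuous_const : Continuous fun b : ℝ≥0 => b * lam i)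
    simpa [Function.comp, hFsimp] using this.congr fun b => (hFsimp b).symm
  have hGcont : Continuous G := by
    have : Continuous fun t : ℝ≥0 => f (Function.update lam j t) := hcont j lam
    have := this.comp (continuous_id.mul continuous_const : Continuous fun b : ℝ≥0 => b * lam j)
    simpa [Function.comp, hGsimp] using this.congr fun b => (hGsimp b).symm
  -- F and G agree on rational points, hence everywhere by density
  have keyR : ∀ r : ℚ, F (Real.toNNReal r) = G (Real.toNNReal r) := by
    intro r
    rcases le_or_gt (r : ℝ) 0 with hr | hr
    · rw [Real.toNNReal_of_nonpos hr]
      have := key 0 1 one_ne_zero (lam i) (lam j)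
      simpa [hF, hG] using this
    · have hrpos : (0 : ℚ) < r := by exact_mod_cast hr
      have hnum : ((r.num.toNat : ℕ) : ℝ) = (r.num : ℝ) := by
        exact_mod_cast congrArg (Int.cast : ℤ → ℝ)
          (Int.toNat_of_nonneg (Rat.num_pos.mpr hrpos).le)
      have hrr : Real.toNNReal r = (r.num.toNat : ℝ≥0) / (r.den : ℝ≥0) := by
        apply NNReal.coe_injective
        rw [Real.coe_toNNReal _ hr.le, Rat.cast_def]
        push_cast
        rw [hnum]
      rw [hrr]
      exact key r.num.toNat r.den r.den_nz (lam i) (lam j)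
  have hFG : F = G := by
    have hd : DenseRange (fun r : ℚ => Real.toNNReal r) := by
      have h1 : DenseRange ((↑) : ℚ → ℝ) := Rat.denseRange_cast
      have h2 : DenseRange Real.toNNReal :=
        fun x => subset_closure ⟨(x : ℝ), Real.toNNReal_coe⟩
      have : (fun r : ℚ => Real.toNNReal r) = Real.toNNReal ∘ ((↑) : ℚ → ℝ) := rfl
      rw [this]
      exact DenseRange.comp h2 h1 continuous_real_toNNReal
    exact hd.equalizer hFcont hGcont (funext keyR)
  have := congrFun hFG a
  rwa [hFsimp, hGsimp] at this
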